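/- arXiv:2410.11826 — 4 statements merged into one kernel-verified Lean document; each statement's English description precedes it below -/
import Mathlib

section
/- Let p be a prior probability density on Θ, and for each i = 1,…,N let p(·|y_i) be the posterior density proportional to p(θ)·L_i(θ) where L_i(θ) = p(y_i|θ) are positive likelihood functions. Let ν_1,…,ν_N ≥ 0 with Σ ν_i = 1. Then the probability measure q* with density proportional to p(θ)·∏_{i=1}^N L_i(θ)^{ν_i} minimizes q ↦ Σ_{i=1}^N ν_i · KL(q, p(·|y_i)) over all probability measures q absolutely continuous with respect to p. -/
open MeasureTheory Real Finset

/-- KL divergence between two probability densities `q` and `r`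
with respect to a base measure `μ`. -/
noncomputable def KLd {Θ : Type*} [MeasurableSpace Θ] (μ : Measure Θ) (q r : Θ → ℝ) : ℝ :=
  ∫ θ, q θ * Real.log (q θ / r θ) ∂μ

/-- The logarithmic pooling `q*(θ) ∝ p(θ) ∏ᵢ Lᵢ(θ)^{νᵢ}` of the posteriors
`p(·|yᵢ) ∝ p·Lᵢ` minimizes `q ↦ ∑ᵢ νᵢ KL(q, p(·|yᵢ))` over all probability
densities `q` (absolutely continuous w.r.t. the positive prior `p`). -/
theorem log_pooling_minimizes_weighted_KL
    {Θ : Type*} [MeasurableSpace Θ] (μ : Measure Θ) (N : ℕ)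
    (p : Θ → ℝ) (L : Fin N → Θ → ℝ) (ν : Fin N → ℝ)
    (hp_meas : Measurable p) (hp_pos : ∀ θ, 0 < p θ)
    (hp_int : ∫ θ, p θ ∂μ = 1)
    (hL_meas : ∀ i, Measurable (L i)) (hL_pos : ∀ i θ, 0 < L i θ)
    (hν_nonneg : ∀ i, 0 ≤ ν i) (hν_sum : ∑ i, ν i = 1)
    -- normalizing constants of the posteriors are finite and positive
    (Z : Fin N → ℝ) (hZ : ∀ i, Z i = ∫ θ, p θ * L i θ ∂μ)
    (hZ_int : ∀ i, Integrable (fun θ => p θ * L i θ) μ) (hZ_pos : ∀ i, 0 < Z i)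
    -- posterior densities
    (post : Fin N → Θ → ℝ) (hpost : ∀ i θ, post i θ = p θ * L i θ / Z i)
    -- normalizing constant of the logarithmic pool is finite and positive
    (Zstar : ℝ) (hZstar : Zstar = ∫ θ, p θ * ∏ i, (L i θ) ^ (ν i) ∂μ)
    (hZstar_int : Integrable (fun θ => p θ * ∏ i, (L i θ) ^ (ν i)) μ)
    (hZstar_pos : 0 < Zstar)
    (qstar : Θ → ℝ) (hqstar : ∀ θ, qstar θ = p θ * (∏ i, (L i θ) ^ (ν i)) / Zstar)
    (hqstar_KL : ∀ i, Integrable (fun θ => qstar θ * Real.log (qstar θ / post i θ)) μ) :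
    ∀ q : Θ → ℝ, Measurable q → (∀ θ, 0 ≤ q θ) → ∫ θ, q θ ∂μ = 1 →
      (∀ i, Integrable (fun θ => q θ * Real.log (q θ / post i θ)) μ) →
      ∑ i, ν i * KLd μ qstar (post i) ≤ ∑ i, ν i * KLd μ q (post i) := by
  intro q hq_meas hq_nonneg hq_one hq_KL
  -- Basic integrability facts
  have hq_int : Integrable q μ := integrable_of_integral_eq_one hq_one
  have hqstar_eq : qstar = fun θ => p θ * (∏ i, (L i θ) ^ (ν i)) / Zstar := funext hqstar
  have hqstar_int : Integrable qstar μ := by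
    rw [hqstar_eq]; exact hZstar_int.div_const Zstar
  have hqstar_pos : ∀ θ, 0 < qstar θ := by
    intro θ
    rw [hqstar θ]
    have : 0 < ∏ i, (L i θ) ^ (ν i) :=
      Finset.prod_pos fun i _ => Real.rpow_pos_of_pos (hL_pos i θ) _
    exact div_pos (mul_pos (hp_pos θ) this) hZstar_pos
  have hqstar_one : ∫ θ, qstar θ ∂μ = 1 := by
    rw [hqstar_eq]
    rw [MeasureTheory.integral_div]
    rw [← hZstar]
    exact div_self hZstar_pos.ne'
  have hpost_pos : ∀ i θ, 0 < post i θ := by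
    intro i θ; rw [hpost i θ]; exact div_pos (mul_pos (hp_pos θ) (hL_pos i θ)) (hZ_pos i)
  set C : ℝ := (∑ i, ν i * Real.log (Z i)) - Real.log Zstar with hC
  -- pointwise identity
  have hpt : ∀ (f : Θ → ℝ), (∀ θ, 0 ≤ f θ) → ∀ θ,
      ∑ i, ν i * (f θ * Real.log (f θ / post i θ))
        = f θ * Real.log (f θ / qstar θ) + f θ * C := by
    intro f hf θ
    rcases eq_or_lt_of_le (hf θ) with h0 | hfp
    · simp [← h0]
    have hlogpost : ∀ i, Real.log (post i θ)
        = Real.log (p θ) + Real.log (L i θ) - Real.log (Z i) := by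
      intro i
      rw [hpost i θ, Real.log_div (mul_pos (hp_pos θ) (hL_pos i θ)).ne' (hZ_pos i).ne',
        Real.log_mul (hp_pos θ).ne' (hL_pos i θ).ne']
    have hlogqstar : Real.log (qstar θ)
        = Real.log (p θ) + (∑ i, ν i * Real.log (L i θ)) - Real.log Zstar := by
      have hprod : 0 < ∏ i, (L i θ) ^ (ν i) :=
        Finset.prod_pos fun i _ => Real.rpow_pos_of_pos (hL_pos i θ) _
      rw [hqstar θ, Real.log_div (mul_pos (hp_pos θ) hprod).ne' hZstar_pos.ne',
        Real.log_mul (hp_pos θ).ne' hprod.ne',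
        Real.log_prod (fun i _ => (Real.rpow_pos_of_pos (hL_pos i θ) _).ne')]
      congr 2
      exact Finset.sum_congr rfl fun i _ => Real.log_rpow (hL_pos i θ) _
    have step1 : ∑ i, ν i * (f θ * Real.log (f θ / post i θ))
        = ∑ i, (f θ * (Real.log (f θ) - Real.log (p θ)) * ν i
            - f θ * (ν i * Real.log (L i θ)) + f θ * (ν i * Real.log (Z i))) := by
      refine Finset.sum_congr rfl fun i _ => ?_
      rw [Real.log_div hfp.ne' (hpost_pos i θ).ne', hlogpost i]
      ring
    rw [step1]
    rw [Finset.sum_add_distrib, Finset.sum_sub_distrib]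
    simp only [← Finset.mul_sum]
    rw [hν_sum,
      Real.log_div hfp.ne' (hqstar_pos θ).ne', hlogqstar, hC]
    ring
  -- integral identity
  have hkey : ∀ (f : Θ → ℝ), (∀ θ, 0 ≤ f θ) → Integrable f μ → ∫ θ, f θ ∂μ = 1 →
      (∀ i, Integrable (fun θ => f θ * Real.log (f θ / post i θ)) μ) →
      (Integrable (fun θ => f θ * Real.log (f θ / qstar θ)) μ ∧
        ∑ i, ν i * KLd μ f (post i) = (∫ θ, f θ * Real.log (f θ / qstar θ) ∂μ) + C) := by
    intro f hf hfi hf1 hfKL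
    have hint1 : Integrable (fun θ => ∑ i, ν i * (f θ * Real.log (f θ / post i θ))) μ :=
      integrable_finset_sum _ fun i _ => (hfKL i).const_mul (ν i)
    have hgi : Integrable (fun θ => f θ * Real.log (f θ / qstar θ)) μ := by
      have : (fun θ => f θ * Real.log (f θ / qstar θ))
          = fun θ => (∑ i, ν i * (f θ * Real.log (f θ / post i θ))) - f θ * C := by
        funext θ
        have := hpt f hf θ
        linarith
      rw [this]
      exact hint1.sub (hfi.mul_const C)
    refine ⟨hgi, ?_⟩
    have : ∑ i, ν i * KLd μ f (post i)
        = ∫ θ, ∑ i, ν i * (f θ * Real.log (f θ / post i θ)) ∂μ := by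
      rw [MeasureTheory.integral_finset_sum _ fun i _ => (hfKL i).const_mul (ν i)]
      exact Finset.sum_congr rfl fun i _ => by
        rw [KLd, MeasureTheory.integral_const_mul]
    rw [this]
    have : ∫ θ, ∑ i, ν i * (f θ * Real.log (f θ / post i θ)) ∂μ
        = ∫ θ, (f θ * Real.log (f θ / qstar θ) + f θ * C) ∂μ := by
      congr 1
      funext θ
      exact hpt f hf θ
    rw [this, MeasureTheory.integral_add hgi (hfi.mul_const C),
      MeasureTheory.integral_mul_const, hf1, one_mul]
  obtain ⟨hq_gi, hq_sum⟩ := hkey q hq_nonneg hq_int hq_one hq_KL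
  obtain ⟨_, hqs_sum⟩ := hkey qstar (fun θ => (hqstar_pos θ).le) hqstar_int hqstar_one hqstar_KL
  have hqs0 : ∫ θ, qstar θ * Real.log (qstar θ / qstar θ) ∂μ = 0 := by
    have : ∀ θ, qstar θ * Real.log (qstar θ / qstar θ) = 0 := fun θ => by
      rw [div_self (hqstar_pos θ).ne', Real.log_one, mul_zero]
    simp [this]
  -- Gibbs inequality
  have hgibbs : 0 ≤ ∫ θ, q θ * Real.log (q θ / qstar θ) ∂μ := by
    have hmono : ∫ θ, (q θ - qstar θ) ∂μ ≤ ∫ θ, q θ * Real.log (q θ / qstar θ) ∂μ := by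
      apply MeasureTheory.integral_mono (hq_int.sub hqstar_int) hq_gi
      intro θ
      show q θ - qstar θ ≤ q θ * Real.log (q θ / qstar θ)
      rcases eq_or_lt_of_le (hq_nonneg θ) with h0 | hp0
      · have := hqstar_pos θ
        rw [← h0]
        simp only [zero_mul, zero_sub]
        linarith
      · have h1 : Real.log (qstar θ / q θ) ≤ qstar θ / q θ - 1 :=
          Real.log_le_sub_one_of_pos (div_pos (hqstar_pos θ) hp0)
        have h2 : Real.log (qstar θ / q θ) = - Real.log (q θ / qstar θ) := by
          rw [← Real.log_inv, inv_div]
        have h3 : 1 - qstar θ / q θ ≤ Real.log (q θ / qstar θ) := by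
          rw [h2] at h1; linarith
        have := mul_le_mul_of_nonneg_left h3 hp0.le
        calc q θ - qstar θ = q θ * (1 - qstar θ / q θ) := by
              field_simp
          _ ≤ q θ * Real.log (q θ / qstar θ) := this
    rw [MeasureTheory.integral_sub hq_int hqstar_int, hq_one, hqstar_one] at hmono
    linarith
  rw [hq_sum, hqs_sum, hqs0]
  linarith
end

section
/- Let p_1,…,p_N be probability densities on Θ (all positive, mutually absolutely continuous). The weights ν = (ν_1,…,ν_N) with ν_i ≥ 0, Σν_i = 1, minimizing Σ_{i=1}^N KL(q_ν, p_i), where q_ν(θ) ∝ ∏_i p_i(θ)^{ν_i} is the logarithmic pool with weights ν, are the equal weights ν_i = 1/N. -/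
open MeasureTheory Real Finset

/-- Among logarithmic pools `q_ν ∝ ∏ᵢ pᵢ^{νᵢ}` of positive densities
`p₁,…,p_N`, the equal weights `νᵢ = 1/N` minimize the unweighted sum
`∑ᵢ KL(q_ν, pᵢ)`. -/
theorem equal_weights_optimal_pooling
    {Θ : Type*} [MeasurableSpace Θ] (μ : Measure Θ) (N : ℕ) (hN : 0 < N)
    (p : Fin N → Θ → ℝ) (hp_meas : ∀ i, Measurable (p i))
    (hp_pos : ∀ i θ, 0 < p i θ) (hp_int : ∀ i, ∫ θ, p i θ ∂μ = 1)
    -- normalized geometric mixtures, for every weight vector in the simplex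
    (Z : (Fin N → ℝ) → ℝ)
    (hZ : ∀ ν, Z ν = ∫ θ, ∏ i, (p i θ) ^ (ν i) ∂μ)
    (qpool : (Fin N → ℝ) → Θ → ℝ)
    (hqpool : ∀ ν θ, qpool ν θ = (∏ i, (p i θ) ^ (ν i)) / Z ν)
    (νeq : Fin N → ℝ) (hνeq : ∀ i, νeq i = 1 / N)
    (hZeq_pos : 0 < Z νeq)
    (hKLeq_int : ∀ i,
      Integrable (fun θ => qpool νeq θ * Real.log (qpool νeq θ / p i θ)) μ) :
    ∀ ν : Fin N → ℝ, (∀ i, 0 ≤ ν i) → ∑ i, ν i = 1 →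
      0 < Z ν →
      (∀ i, Integrable (fun θ => qpool ν θ * Real.log (qpool ν θ / p i θ)) μ) →
      ∑ i, KLd μ (qpool νeq) (p i) ≤ ∑ i, KLd μ (qpool ν) (p i) := by
  intro ν hν0 hν1 hZν hKLν
  have hNR : (0:ℝ) < N := Nat.cast_pos.mpr hN
  -- positivity of pools
  have hpool_pos : ∀ (w : Fin N → ℝ), 0 < Z w → ∀ θ, 0 < qpool w θ := by
    intro w hZw θ
    rw [hqpool]
    exact div_pos (Finset.prod_pos fun i _ => Real.rpow_pos_of_pos (hp_pos i θ) _) hZw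
  -- integrability and total mass one of pools
  have hpool_int : ∀ (w : Fin N → ℝ), 0 < Z w →
      Integrable (qpool w) μ ∧ ∫ θ, qpool w θ ∂μ = 1 := by
    intro w hZw
    have hint : Integrable (fun θ => ∏ i, p i θ ^ w i) μ := by
      by_contra h
      rw [hZ, integral_undef h] at hZw
      exact lt_irrefl _ hZw
    have hfun : qpool w = fun θ => (∏ i, p i θ ^ w i) / Z w := funext fun θ => hqpool w θ
    constructor
    · rw [hfun]; exact hint.div_const _
    · rw [hfun, integral_div, ← hZ, div_self hZw.ne']
  set c := (N:ℝ) * Real.log (Z νeq) with hc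
  -- key identity
  have key : ∀ (w : Fin N → ℝ), 0 < Z w →
      (∀ i, Integrable (fun θ => qpool w θ * Real.log (qpool w θ / p i θ)) μ) →
      ∑ i, KLd μ (qpool w) (p i)
        = N * ∫ θ, qpool w θ * Real.log (qpool w θ / qpool νeq θ) ∂μ - c := by
    intro w hZw hInt
    have hqw := hpool_pos w hZw
    have hqe := hpool_pos νeq hZeq_pos
    obtain ⟨hw_int, hw_one⟩ := hpool_int w hZw
    have hpt : ∀ θ, ∑ i, qpool w θ * Real.log (qpool w θ / p i θ)
        = N * (qpool w θ * Real.log (qpool w θ / qpool νeq θ)) - c * qpool w θ := by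
      intro θ
      have hppos : ∀ i, (0:ℝ) < p i θ := fun i => hp_pos i θ
      have hlogq : ∀ v : Fin N → ℝ,
          Real.log (∏ i, p i θ ^ v i) = ∑ i, v i * Real.log (p i θ) := by
        intro v
        rw [Real.log_prod (fun i _ => (Real.rpow_pos_of_pos (hppos i) _).ne')]
        exact Finset.sum_congr rfl fun i _ => Real.log_rpow (hppos i) _
      have helog : Real.log (qpool νeq θ)
          = (1/(N:ℝ)) * (∑ i, Real.log (p i θ)) - Real.log (Z νeq) := by
        rw [hqpool, Real.log_div
          (Finset.prod_pos fun i _ => Real.rpow_pos_of_pos (hppos i) _).ne' hZeq_pos.ne',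
          hlogq, Finset.mul_sum]
        congr 1
        exact Finset.sum_congr rfl fun i _ => by rw [hνeq]
      have hsum : ∑ i, Real.log (p i θ)
          = N * Real.log (qpool νeq θ) + N * Real.log (Z νeq) := by
        rw [helog]; field_simp; ring
      have hwlog : Real.log (qpool w θ)
          = (∑ i, w i * Real.log (p i θ)) - Real.log (Z w) := by
        rw [hqpool, Real.log_div
          (Finset.prod_pos fun i _ => Real.rpow_pos_of_pos (hppos i) _).ne' hZw.ne', hlogq]
      have hld : ∀ i, Real.log (qpool w θ / p i θ)
          = Real.log (qpool w θ) - Real.log (p i θ) :=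
        fun i => Real.log_div (hqw θ).ne' (hppos i).ne'
      have hld2 : Real.log (qpool w θ / qpool νeq θ)
          = Real.log (qpool w θ) - Real.log (qpool νeq θ) :=
        Real.log_div (hqw θ).ne' (hqe θ).ne'
      simp only [hld, hld2, mul_sub, Finset.sum_sub_distrib, ← Finset.mul_sum,
        Finset.sum_const, Finset.card_univ, Fintype.card_fin, nsmul_eq_mul]
      rw [hsum, hc]
      ring
    -- integrability of the relative-entropy integrand w.r.t. the equal pool
    have hS_int : Integrable
        (fun θ => ∑ i, qpool w θ * Real.log (qpool w θ / p i θ)) μ :=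
      integrable_finset_sum _ fun i _ => hInt i
    have hf_int : Integrable
        (fun θ => qpool w θ * Real.log (qpool w θ / qpool νeq θ)) μ := by
      have heq : (fun θ => qpool w θ * Real.log (qpool w θ / qpool νeq θ))
          = fun θ => ((∑ i, qpool w θ * Real.log (qpool w θ / p i θ)) + c * qpool w θ) / N := by
        funext θ
        rw [hpt θ]
        field_simp
        ring
      rw [heq]
      exact (hS_int.add (hw_int.const_mul c)).div_const _
    calc ∑ i, KLd μ (qpool w) (p i)
        = ∫ θ, ∑ i, qpool w θ * Real.log (qpool w θ / p i θ) ∂μ := by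
          rw [integral_finset_sum _ fun i _ => hInt i]; rfl
      _ = ∫ θ, (N * (qpool w θ * Real.log (qpool w θ / qpool νeq θ)) - c * qpool w θ) ∂μ := by
          simp only [hpt]
      _ = N * ∫ θ, qpool w θ * Real.log (qpool w θ / qpool νeq θ) ∂μ - c := by
          rw [integral_sub (hf_int.const_mul _) (hw_int.const_mul c),
            integral_const_mul, integral_const_mul, hw_one, mul_one]
  -- LHS equals -c
  have hLHS : ∑ i, KLd μ (qpool νeq) (p i) = -c := by
    rw [key νeq hZeq_pos hKLeq_int]
    have hz : ∀ θ, qpool νeq θ * Real.log (qpool νeq θ / qpool νeq θ) = 0 := by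
      intro θ
      rw [div_self (hpool_pos νeq hZeq_pos θ).ne', Real.log_one, mul_zero]
    simp only [hz, integral_zero, mul_zero, zero_sub]
  -- nonnegativity of relative entropy (Gibbs)
  obtain ⟨hν_int, hν_one⟩ := hpool_int ν hZν
  obtain ⟨he_int, he_one⟩ := hpool_int νeq hZeq_pos
  have hf_int : Integrable
      (fun θ => qpool ν θ * Real.log (qpool ν θ / qpool νeq θ)) μ := by
    have hS_int : Integrable
        (fun θ => ∑ i, qpool ν θ * Real.log (qpool ν θ / p i θ)) μ :=
      integrable_finset_sum _ fun i _ => hKLν i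
    -- reuse key's pointwise identity by re-deriving it is painful; instead reconstruct:
    have hKν := key ν hZν hKLν
    -- derive integrability from the identity function form
    -- we re-derive the pointwise identity
    have hpt : ∀ θ, ∑ i, qpool ν θ * Real.log (qpool ν θ / p i θ)
        = N * (qpool ν θ * Real.log (qpool ν θ / qpool νeq θ)) - c * qpool ν θ := by
      intro θ
      have hppos : ∀ i, (0:ℝ) < p i θ := fun i => hp_pos i θ
      have hlogq : ∀ v : Fin N → ℝ,
          Real.log (∏ i, p i θ ^ v i) = ∑ i, v i * Real.log (p i θ) := by
        intro v
        rw [Real.log_prod (fun i _ => (Real.rpow_pos_of_pos (hppos i) _).ne')]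
        exact Finset.sum_congr rfl fun i _ => Real.log_rpow (hppos i) _
      have helog : Real.log (qpool νeq θ)
          = (1/(N:ℝ)) * (∑ i, Real.log (p i θ)) - Real.log (Z νeq) := by
        rw [hqpool, Real.log_div
          (Finset.prod_pos fun i _ => Real.rpow_pos_of_pos (hppos i) _).ne' hZeq_pos.ne',
          hlogq, Finset.mul_sum]
        congr 1
        exact Finset.sum_congr rfl fun i _ => by rw [hνeq]
      have hsum : ∑ i, Real.log (p i θ)
          = N * Real.log (qpool νeq θ) + N * Real.log (Z νeq) := by
        rw [helog]; field_simp; ring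
      have hld : ∀ i, Real.log (qpool ν θ / p i θ)
          = Real.log (qpool ν θ) - Real.log (p i θ) :=
        fun i => Real.log_div (hpool_pos ν hZν θ).ne' (hppos i).ne'
      have hld2 : Real.log (qpool ν θ / qpool νeq θ)
          = Real.log (qpool ν θ) - Real.log (qpool νeq θ) :=
        Real.log_div (hpool_pos ν hZν θ).ne' (hpool_pos νeq hZeq_pos θ).ne'
      simp only [hld, hld2, mul_sub, Finset.sum_sub_distrib, ← Finset.mul_sum,
        Finset.sum_const, Finset.card_univ, Fintype.card_fin, nsmul_eq_mul]
      rw [hsum, hc]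
      ring
    have heq : (fun θ => qpool ν θ * Real.log (qpool ν θ / qpool νeq θ))
        = fun θ => ((∑ i, qpool ν θ * Real.log (qpool ν θ / p i θ)) + c * qpool ν θ) / N := by
      funext θ
      rw [hpt θ]
      field_simp
      ring
    rw [heq]
    exact (hS_int.add (hν_int.const_mul c)).div_const _
  have hgibbs : 0 ≤ ∫ θ, qpool ν θ * Real.log (qpool ν θ / qpool νeq θ) ∂μ := by
    have hpt : ∀ θ, qpool ν θ - qpool νeq θ
        ≤ qpool ν θ * Real.log (qpool ν θ / qpool νeq θ) := by
      intro θ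
      have ha := hpool_pos ν hZν θ
      have hb := hpool_pos νeq hZeq_pos θ
      have h1 : Real.log (qpool νeq θ / qpool ν θ) ≤ qpool νeq θ / qpool ν θ - 1 :=
        Real.log_le_sub_one_of_pos (div_pos hb ha)
      have h2 : Real.log (qpool ν θ / qpool νeq θ)
          = - Real.log (qpool νeq θ / qpool ν θ) := by
        rw [← Real.log_inv, inv_div]
      have h3 : qpool ν θ * (qpool νeq θ / qpool ν θ - 1) = qpool νeq θ - qpool ν θ := by
        field_simp
      nlinarith [mul_le_mul_of_nonneg_left h1 ha.le]
    have hmono := integral_mono (hν_int.sub he_int) hf_int hpt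
    simp only [Pi.sub_apply] at hmono
    rwa [integral_sub hν_int he_int, hν_one, he_one, sub_self] at hmono
  rw [hLHS, key ν hZν hKLν]
  nlinarith [mul_nonneg hNR.le hgibbs]
end

section
/- With the same setup as SPCE (θ_0,…,θ_L i.i.d. from prior p(θ), Y_{1:K} generated given θ_0 with likelihoods p(y_k|θ_0,ξ_k)), SPCE(ξ_1,…,ξ_K) is a lower bound of the total expected information gain I_total = E_{p(θ_0)∏_k p(y_k|θ_0,ξ_k)}[ log( ∏_k p(Y_k|θ_0,ξ_k) / p(Y_{1:K}|ξ_{1:K}) ) ], where p(y_{1:K}|ξ_{1:K}) = E_{θ~p}[∏_k p(y_k|θ,ξ_k)]. -/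
open MeasureTheory Real Finset
lemma aux_map_eval {Θ : Type*} [MeasurableSpace Θ] {ι : Type*} [Fintype ι] [DecidableEq ι]
    (P : Measure Θ) [IsProbabilityMeasure P] (i : ι) :
    Measure.map (Function.eval i) (Measure.pi fun _ : ι => P) = P := by
  ext s hs
  rw [Measure.map_apply (measurable_pi_apply i) hs, Set.eval_preimage, Measure.pi_pi]
  rw [Finset.prod_eq_single i (fun j _ hj => by simp [Function.update_of_ne hj]) (by simp)]
  simp

lemma aux_ratio_integrable {Θ : Type*} [MeasurableSpace Θ] (P : Measure Θ)
    [IsProbabilityMeasure P] (n : ℕ) (u : Θ → ℝ) (hu : Measurable u)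
    (hupos : ∀ θ, 0 < u θ) (j : Fin (n + 1)) :
    Integrable (fun θs : Fin (n + 1) → Θ => u (θs j) / ∑ ℓ, u (θs ℓ))
      (Measure.pi fun _ => P) := by
  have hS : ∀ θs : Fin (n + 1) → Θ, 0 < ∑ ℓ, u (θs ℓ) := fun θs =>
    Finset.sum_pos (fun ℓ _ => hupos _) ⟨j, Finset.mem_univ j⟩
  have hmeas : Measurable (fun θs : Fin (n + 1) → Θ => u (θs j) / ∑ ℓ, u (θs ℓ)) :=
    (hu.comp (measurable_pi_apply j)).div
      (Finset.univ.measurable_sum fun ℓ _ => hu.comp (measurable_pi_apply ℓ))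
  refine (integrable_const (1 : ℝ)).mono' hmeas.aestronglyMeasurable (ae_of_all _ fun θs => ?_)
  rw [Real.norm_of_nonneg (div_nonneg (hupos _).le (hS θs).le)]
  rw [div_le_one (hS θs)]
  exact Finset.single_le_sum (fun ℓ _ => (hupos _).le) (Finset.mem_univ j)

lemma aux_ratio_integral {Θ : Type*} [MeasurableSpace Θ] (P : Measure Θ)
    [IsProbabilityMeasure P] (n : ℕ) (u : Θ → ℝ) (hu : Measurable u)
    (hupos : ∀ θ, 0 < u θ) (j : Fin (n + 1)) :
    ∫ θs : Fin (n + 1) → Θ, u (θs j) / ∑ ℓ, u (θs ℓ) ∂(Measure.pi fun _ => P)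
      = 1 / (n + 1) := by
  have hS : ∀ θs : Fin (n + 1) → Θ, 0 < ∑ ℓ, u (θs ℓ) := fun θs =>
    Finset.sum_pos (fun ℓ _ => hupos _) ⟨j, Finset.mem_univ j⟩
  have key : ∀ j₁ j₂ : Fin (n + 1),
      (∫ θs : Fin (n + 1) → Θ, u (θs j₁) / ∑ ℓ, u (θs ℓ) ∂(Measure.pi fun _ => P))
        = ∫ θs : Fin (n + 1) → Θ, u (θs j₂) / ∑ ℓ, u (θs ℓ) ∂(Measure.pi fun _ => P) := by
    intro j₁ j₂
    have hmp := measurePreserving_piCongrLeft (fun _ : Fin (n + 1) => P) (Equiv.swap j₁ j₂)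
    rw [← hmp.integral_comp' (fun θs => u (θs j₂) / ∑ ℓ, u (θs ℓ))]
    congr 1
    funext θs
    have happ : ∀ i : Fin (n + 1),
        (MeasurableEquiv.piCongrLeft (fun _ => Θ) (Equiv.swap j₁ j₂)) θs i
          = θs ((Equiv.swap j₁ j₂) i) := by
      intro i
      conv_lhs => rw [show i = (Equiv.swap j₁ j₂) ((Equiv.swap j₁ j₂).symm i) by simp]
      rw [MeasurableEquiv.coe_piCongrLeft, Equiv.piCongrLeft_apply_apply]
      simp
    simp only [happ]
    rw [Equiv.swap_apply_right]
    congr 1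
    exact (Equiv.sum_comp (Equiv.swap j₁ j₂) (fun i => u (θs i))).symm
  have hsum : ∑ j' : Fin (n + 1),
      (∫ θs : Fin (n + 1) → Θ, u (θs j') / ∑ ℓ, u (θs ℓ) ∂(Measure.pi fun _ => P)) = 1 := by
    rw [← integral_finset_sum _ (fun j' _ => aux_ratio_integrable P n u hu hupos j')]
    have : ∀ θs : Fin (n + 1) → Θ,
        (∑ j' : Fin (n + 1), u (θs j') / ∑ ℓ, u (θs ℓ)) = 1 := by
      intro θs
      rw [← Finset.sum_div, div_self (hS θs).ne']
    simp only [this]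
    simp
  have hval : ((n : ℝ) + 1) *
      (∫ θs : Fin (n + 1) → Θ, u (θs j) / ∑ ℓ, u (θs ℓ) ∂(Measure.pi fun _ => P)) = 1 := by
    have h2 : (∑ j' : Fin (n + 1),
        (∫ θs : Fin (n + 1) → Θ, u (θs j') / ∑ ℓ, u (θs ℓ) ∂(Measure.pi fun _ => P)))
        = ((n : ℝ) + 1) *
          (∫ θs : Fin (n + 1) → Θ, u (θs j) / ∑ ℓ, u (θs ℓ) ∂(Measure.pi fun _ => P)) := by
      rw [Finset.sum_congr rfl fun j' _ => key j' j, Finset.sum_const, Finset.card_univ,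
        Fintype.card_fin, nsmul_eq_mul]
      norm_cast
    rw [← h2]
    exact hsum
  have hpos : (0 : ℝ) < (n : ℝ) + 1 := by positivity
  rw [eq_div_iff hpos.ne', mul_comm]
  exact hval

/-- SPCE is a lower bound on the total expected information gain: with
`θ₀,…,θ_L` i.i.d. from the prior `P`, `Y₁,…,Y_K` drawn given `θ₀` with
likelihoods `lik k θ₀ ·`, and marginal
`pmarg ys = E_{θ~P}[∏ₖ lik k θ (ys k)]`, one has `SPCE ≤ I_total`. -/
theorem SPCE_le_total_EIG
    {Θ Y : Type*} [MeasurableSpace Θ] [MeasurableSpace Y]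
    (P : Measure Θ) [IsProbabilityMeasure P]
    (ν : Measure Y) [SigmaFinite ν]
    (K L : ℕ)
    (lik : Fin K → Θ → Y → ℝ)
    (hlik_meas : ∀ k, Measurable (Function.uncurry (lik k)))
    (hlik_pos : ∀ k θ y, 0 < lik k θ y)
    (hlik_int : ∀ k θ, ∫ y, lik k θ y ∂ν = 1)
    (pmarg : (Fin K → Y) → ℝ)
    (hpmarg : ∀ ys, pmarg ys = ∫ θ, ∏ k, lik k θ (ys k) ∂P)
    (hpmarg_pos : ∀ ys, 0 < pmarg ys)
    -- integrability of the I_total integrand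
    (hItot_int : Integrable (fun z : Θ × (Fin K → Y) =>
      (∏ k, lik k z.1 (z.2 k)) * Real.log ((∏ k, lik k z.1 (z.2 k)) / pmarg z.2))
      (P.prod (Measure.pi fun _ => ν)))
    -- integrability of the SPCE integrand
    (hSPCE_int : Integrable (fun z : (Fin (L + 1) → Θ) × (Fin K → Y) =>
      (∏ k, lik k (z.1 0) (z.2 k)) *
        Real.log ((∏ k, lik k (z.1 0) (z.2 k)) /
          ((1 / (L + 1 : ℝ)) * ∑ ℓ, ∏ k, lik k (z.1 ℓ) (z.2 k))))
      ((Measure.pi fun _ => P).prod (Measure.pi fun _ => ν))) :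
    (∫ θs : Fin (L + 1) → Θ,
        ∫ ys : Fin K → Y,
          (∏ k, lik k (θs 0) (ys k)) *
            Real.log ((∏ k, lik k (θs 0) (ys k)) /
              ((1 / (L + 1 : ℝ)) * ∑ ℓ, ∏ k, lik k (θs ℓ) (ys k)))
          ∂(Measure.pi fun _ => ν)
      ∂(Measure.pi fun _ => P))
    ≤ ∫ θ₀ : Θ,
        ∫ ys : Fin K → Y,
          (∏ k, lik k θ₀ (ys k)) *
            Real.log ((∏ k, lik k θ₀ (ys k)) / pmarg ys)
          ∂(Measure.pi fun _ => ν)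
      ∂P := by
  -- notation
  set μΘ : Measure (Fin (L + 1) → Θ) := Measure.pi fun _ => P with hμΘdef
  set μY : Measure (Fin K → Y) := Measure.pi fun _ => ν with hμYdef
  haveI : IsProbabilityMeasure μΘ := by rw [hμΘdef]; infer_instance
  haveI : SigmaFinite μY := by rw [hμYdef]; infer_instance
  set big : Θ × (Fin K → Y) → ℝ := fun p => ∏ k, lik k p.1 (p.2 k) with hbigdef
  set T : ((Fin (L + 1) → Θ) × (Fin K → Y)) → Θ × (Fin K → Y) := fun z => (z.1 0, z.2)
    with hTdef
  set G : ((Fin (L + 1) → Θ) × (Fin K → Y)) → ℝ := fun z =>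
    (∏ k, lik k (z.1 0) (z.2 k)) *
      Real.log ((∏ k, lik k (z.1 0) (z.2 k)) /
        ((1 / (L + 1 : ℝ)) * ∑ ℓ, ∏ k, lik k (z.1 ℓ) (z.2 k))) with hGdef
  set q : ((Fin (L + 1) → Θ) × (Fin K → Y)) → ℝ := fun z =>
    (∏ k, lik k (z.1 0) (z.2 k)) *
      (pmarg z.2 / ((1 / (L + 1 : ℝ)) * ∑ ℓ, ∏ k, lik k (z.1 ℓ) (z.2 k))) with hqdef
  -- basic positivity
  have hLpos : (0 : ℝ) < 1 / (L + 1 : ℝ) := by positivity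
  have hprod_pos : ∀ (θ : Θ) (ys : Fin K → Y), 0 < ∏ k, lik k θ (ys k) := fun θ ys =>
    Finset.prod_pos fun k _ => hlik_pos k θ (ys k)
  have hS_pos : ∀ (θs : Fin (L + 1) → Θ) (ys : Fin K → Y),
      0 < ∑ ℓ, ∏ k, lik k (θs ℓ) (ys k) := fun θs ys =>
    Finset.sum_pos (fun ℓ _ => hprod_pos _ _) ⟨0, Finset.mem_univ 0⟩
  -- measurability
  have hlik_m : ∀ (k : Fin K) (θ : Θ), Measurable (lik k θ) := fun k θ =>
    (hlik_meas k).comp measurable_prodMk_left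
  have hbig_meas : Measurable big :=
    Finset.univ.measurable_prod fun k _ =>
      (hlik_meas k).comp (measurable_fst.prodMk ((measurable_pi_apply k).comp measurable_snd))
  have hw : ∀ ℓ : Fin (L + 1),
      Measurable (fun z : (Fin (L + 1) → Θ) × (Fin K → Y) => ∏ k, lik k (z.1 ℓ) (z.2 k)) :=
    fun ℓ => Finset.univ.measurable_prod fun k _ => by
      exact (hlik_meas k).comp'
        (Measurable.prodMk (by exact (measurable_pi_apply ℓ).comp' measurable_fst)
          (by exact (measurable_pi_apply k).comp' measurable_snd))
  have hS_meas : Measurable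
      (fun z : (Fin (L + 1) → Θ) × (Fin K → Y) => ∑ ℓ, ∏ k, lik k (z.1 ℓ) (z.2 k)) :=
    Finset.univ.measurable_sum fun ℓ _ => hw ℓ
  have hm_meas : Measurable pmarg := by
    have h1 : pmarg = fun ys => ∫ θ, big (Prod.swap (ys, θ)) ∂P := funext fun ys => hpmarg ys
    rw [h1]
    exact ((hbig_meas.comp measurable_swap).stronglyMeasurable.integral_prod_right').measurable
  -- likelihoods are integrable
  have hlik_integrable : ∀ k θ, Integrable (lik k θ) ν := by
    intro k θ
    by_contra h
    have := hlik_int k θ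
    rw [integral_undef h] at this
    norm_num at this
  -- product likelihood over ys
  have hprodY : ∀ θ, Integrable (fun ys : Fin K → Y => ∏ k, lik k θ (ys k)) μY := by
    intro θ
    rw [hμYdef]
    letI : MeasureSpace Y := ⟨ν⟩
    haveI : SigmaFinite (volume : Measure Y) := ‹SigmaFinite ν›
    exact Integrable.fintype_prod (f := fun k => lik k θ) (fun k => hlik_integrable k θ)
  have hprodY_val : ∀ θ, ∫ ys : Fin K → Y, ∏ k, lik k θ (ys k) ∂μY = 1 := by
    intro θ
    rw [hμYdef]
    letI : MeasureSpace Y := ⟨ν⟩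
    haveI : SigmaFinite (volume : Measure Y) := ‹SigmaFinite ν›
    rw [show (Measure.pi fun _ : Fin K => ν) = (volume : Measure (Fin K → Y)) from rfl]
    erw [MeasureTheory.integral_fintype_prod_eq_prod (f := fun k => lik k θ) (μ := fun _ => ν)]
    exact Finset.prod_eq_one fun k _ => hlik_int k θ
  have hnorm_prodY : ∀ θ, (∫ ys : Fin K → Y, ‖∏ k, lik k θ (ys k)‖ ∂μY) = 1 := by
    intro θ
    rw [show (fun ys : Fin K → Y => ‖∏ k, lik k θ (ys k)‖)
        = fun ys : Fin K → Y => ∏ k, lik k θ (ys k) from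
      funext fun ys => Real.norm_of_nonneg (hprod_pos θ ys).le]
    exact hprodY_val θ
  -- big is integrable on the product, with integral one
  have hbig_int : Integrable big (P.prod μY) := by
    rw [integrable_prod_iff hbig_meas.aestronglyMeasurable]
    refine ⟨ae_of_all _ fun θ => hprodY θ, ?_⟩
    rw [show (fun θ => ∫ ys, ‖big (θ, ys)‖ ∂μY) = fun _ => (1 : ℝ) from
      funext fun θ => hnorm_prodY θ]
    exact integrable_const 1
  have hbig_val : ∫ p, big p ∂(P.prod μY) = 1 := by
    rw [integral_prod _ hbig_int]
    rw [show (fun θ => ∫ ys, big (θ, ys) ∂μY) = fun _ => (1 : ℝ) from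
      funext fun θ => hprodY_val θ]
    simp
  -- pmarg integrable with integral one
  have hm_int : Integrable pmarg μY := by
    have h2 := (hbig_int.swap).integral_prod_left
    rw [show pmarg = fun ys => ∫ θ, (big ∘ Prod.swap) (ys, θ) ∂P from
      funext fun ys => hpmarg ys]
    exact h2
  have hm_val : ∫ ys, pmarg ys ∂μY = 1 := by
    have h1 := integral_prod_symm big hbig_int
    rw [hbig_val] at h1
    rw [show (fun ys => pmarg ys) = fun ys => ∫ θ, big (θ, ys) ∂P from
      funext fun ys => hpmarg ys]
    exact h1.symm
  -- the measure-preserving projection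
  have hT : MeasurePreserving T (μΘ.prod μY) (P.prod μY) := by
    have h0 : MeasurePreserving (Function.eval (0 : Fin (L + 1))) μΘ P :=
      ⟨measurable_pi_apply 0, by rw [hμΘdef]; exact aux_map_eval P 0⟩
    exact h0.prod (MeasurePreserving.id μY)
  have hF0_meas : Measurable (fun p : Θ × (Fin K → Y) =>
      big p * Real.log (big p / pmarg p.2)) :=
    hbig_meas.mul (Real.measurable_log.comp (hbig_meas.div (hm_meas.comp measurable_snd)))
  -- F := Itot integrand composed with T
  have hF_int : Integrable (fun z => big (T z) * Real.log (big (T z) / pmarg (T z).2))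
      (μΘ.prod μY) := by
    have := (hT.integrable_comp hF0_meas.aestronglyMeasurable).mpr hItot_int
    exact this
  have hF_val : ∫ z, big (T z) * Real.log (big (T z) / pmarg (T z).2) ∂(μΘ.prod μY)
      = ∫ p, big p * Real.log (big p / pmarg p.2) ∂(P.prod μY) := by
    rw [← hT.map_eq]
    exact (integral_map hT.measurable.aemeasurable hF0_meas.aestronglyMeasurable).symm
  -- f := big ∘ T integrable with integral one
  have hf_int : Integrable (fun z => big (T z)) (μΘ.prod μY) :=
    (hT.integrable_comp hbig_meas.aestronglyMeasurable).mpr hbig_int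
  have hf_val : ∫ z, big (T z) ∂(μΘ.prod μY) = 1 := by
    rw [show ∫ z, big (T z) ∂(μΘ.prod μY) = ∫ p, big p ∂(P.prod μY) from by
      rw [← hT.map_eq]
      exact (integral_map hT.measurable.aemeasurable hbig_meas.aestronglyMeasurable).symm]
    exact hbig_val
  -- q : measurable
  have hq_meas : Measurable q :=
    (hw 0).mul ((hm_meas.comp measurable_snd).div (measurable_const.mul hS_meas))
  -- slice facts for q
  have hu_meas : ∀ ys : Fin K → Y, Measurable (fun θ => ∏ k, lik k θ (ys k)) := fun ys =>
    Finset.univ.measurable_prod fun k _ =>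
      (hlik_meas k).comp (measurable_id.prodMk measurable_const)
  have hslice_eq : ∀ (ys : Fin K → Y) (θs : Fin (L + 1) → Θ),
      q (θs, ys) = (((L : ℝ) + 1) * pmarg ys) *
        ((∏ k, lik k (θs 0) (ys k)) / ∑ ℓ, ∏ k, lik k (θs ℓ) (ys k)) := by
    intro ys θs
    have hS := hS_pos θs ys
    rw [hqdef]
    simp only
    have hL1 : (L : ℝ) + 1 ≠ 0 := by positivity
    field_simp
  have hslice_int : ∀ ys : Fin K → Y,
      Integrable (fun θs : Fin (L + 1) → Θ => q (θs, ys)) μΘ := by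
    intro ys
    rw [show (fun θs : Fin (L + 1) → Θ => q (θs, ys))
        = fun θs : Fin (L + 1) → Θ => (((L : ℝ) + 1) * pmarg ys) *
            ((∏ k, lik k (θs 0) (ys k)) / ∑ ℓ, ∏ k, lik k (θs ℓ) (ys k)) from
      funext fun θs => hslice_eq ys θs, hμΘdef]
    exact (aux_ratio_integrable P L _ (hu_meas ys) (fun θ => hprod_pos θ ys) 0).const_mul _
  have hslice_val : ∀ ys : Fin K → Y,
      ∫ θs : Fin (L + 1) → Θ, q (θs, ys) ∂μΘ = pmarg ys := by
    intro ys
    rw [show (fun θs : Fin (L + 1) → Θ => q (θs, ys))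
        = fun θs : Fin (L + 1) → Θ => (((L : ℝ) + 1) * pmarg ys) *
            ((∏ k, lik k (θs 0) (ys k)) / ∑ ℓ, ∏ k, lik k (θs ℓ) (ys k)) from
      funext fun θs => hslice_eq ys θs, hμΘdef]
    rw [integral_const_mul]
    rw [aux_ratio_integral P L _ (hu_meas ys) (fun θ => hprod_pos θ ys) 0]
    have hL1 : (L : ℝ) + 1 ≠ 0 := by positivity
    field_simp
  have hq_nonneg : ∀ z : (Fin (L + 1) → Θ) × (Fin K → Y), 0 ≤ q z := by
    intro z
    rw [hqdef]
    exact mul_nonneg (hprod_pos _ _).le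
      (div_nonneg (hpmarg_pos z.2).le (mul_nonneg hLpos.le (hS_pos z.1 z.2).le))
  -- q integrable with integral one
  have hq_int : Integrable q (μΘ.prod μY) := by
    rw [integrable_prod_iff' hq_meas.aestronglyMeasurable]
    refine ⟨ae_of_all _ fun ys => hslice_int ys, ?_⟩
    rw [show (fun ys => ∫ θs, ‖q (θs, ys)‖ ∂μΘ) = pmarg from funext fun ys => by
      rw [show (fun θs : Fin (L + 1) → Θ => ‖q (θs, ys)‖)
          = fun θs : Fin (L + 1) → Θ => q (θs, ys) from
        funext fun θs => Real.norm_of_nonneg (hq_nonneg (θs, ys))]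
      exact hslice_val ys]
    exact hm_int
  have hq_val : ∫ z, q z ∂(μΘ.prod μY) = 1 := by
    rw [integral_prod_symm _ hq_int]
    rw [show (fun ys => ∫ θs, q (θs, ys) ∂μΘ) = pmarg from funext fun ys => hslice_val ys]
    exact hm_val
  -- pointwise inequality
  have hpt : ∀ z : (Fin (L + 1) → Θ) × (Fin K → Y),
      big (T z) - q z ≤ big (T z) * Real.log (big (T z) / pmarg (T z).2) - G z := by
    intro z
    have ha : 0 < big (T z) := hprod_pos _ _
    have hm := hpmarg_pos z.2
    have hv : 0 < (1 / (L + 1 : ℝ)) * ∑ ℓ, ∏ k, lik k (z.1 ℓ) (z.2 k) :=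
      mul_pos hLpos (hS_pos z.1 z.2)
    have hlog := Real.log_le_sub_one_of_pos (div_pos hm hv)
    rw [Real.log_div hm.ne' hv.ne'] at hlog
    have hkey : 1 - pmarg z.2 / ((1 / (L + 1 : ℝ)) * ∑ ℓ, ∏ k, lik k (z.1 ℓ) (z.2 k))
        ≤ Real.log ((1 / (L + 1 : ℝ)) * ∑ ℓ, ∏ k, lik k (z.1 ℓ) (z.2 k))
          - Real.log (pmarg z.2) := by linarith
    have h2 := mul_le_mul_of_nonneg_left hkey ha.le
    rw [hGdef, hqdef]
    simp only
    rw [Real.log_div (hprod_pos (z.1 0) z.2).ne' hm.ne',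
      Real.log_div (hprod_pos (z.1 0) z.2).ne' hv.ne']
    rw [hbigdef, hTdef] at h2 ⊢
    simp only at h2 ⊢
    nlinarith [h2]
  -- put everything together
  have hG_int : Integrable G (μΘ.prod μY) := hSPCE_int
  have hmono : ∫ z, (big (T z) - q z) ∂(μΘ.prod μY)
      ≤ ∫ z, (big (T z) * Real.log (big (T z) / pmarg (T z).2) - G z) ∂(μΘ.prod μY) :=
    integral_mono (hf_int.sub hq_int) (hF_int.sub hG_int) hpt
  rw [integral_sub hf_int hq_int, integral_sub hF_int hG_int, hf_val, hq_val, hF_val] at hmono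
  have e1 : (∫ θs : Fin (L + 1) → Θ,
        ∫ ys : Fin K → Y,
          (∏ k, lik k (θs 0) (ys k)) *
            Real.log ((∏ k, lik k (θs 0) (ys k)) /
              ((1 / (L + 1 : ℝ)) * ∑ ℓ, ∏ k, lik k (θs ℓ) (ys k)))
          ∂μY ∂μΘ) = ∫ z, G z ∂(μΘ.prod μY) := (integral_prod _ hSPCE_int).symm
  have e2 : (∫ θ₀ : Θ,
        ∫ ys : Fin K → Y,
          (∏ k, lik k θ₀ (ys k)) *
            Real.log ((∏ k, lik k θ₀ (ys k)) / pmarg ys)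
          ∂μY ∂P) = ∫ p, big p * Real.log (big p / pmarg p.2) ∂(P.prod μY) :=
    (integral_prod _ hItot_int).symm
  rw [e1, e2]
  linarith
end

section
/- With θ_0 ~ p(θ), Y_{1:K} ~ ∏_k p(y_k|θ_0,ξ_k), and θ_1,…,θ_L i.i.d. ~ p(θ) independent of (θ_0, Y_{1:K}), define SNMC = E[log( ∏_{k=1}^K p(Y_k|θ_0,ξ_k) / ((1/L) Σ_{ℓ=1}^L ∏_{k=1}^K p(Y_k|θ_ℓ,ξ_k)) )]. Then SNMC is an upper bound of the total expected information gain I_total = E[log( ∏_k p(Y_k|θ_0,ξ_k) / p(Y_{1:K}|ξ_{1:K}) )] with p(y_{1:K}|ξ_{1:K}) = E_{θ~p}[∏_k p(y_k|θ,ξ_k)]. -/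
open MeasureTheory Real Finset

lemma aux_measurePreserving_eval {ι : Type*} [Fintype ι] {Θ : Type*} [MeasurableSpace Θ]
    (P : Measure Θ) [IsProbabilityMeasure P] (i : ι) :
    MeasurePreserving (fun t : ι → Θ => t i) (Measure.pi fun _ => P) P := by
  classical
  refine ⟨measurable_pi_apply i, ?_⟩
  refine Measure.ext fun s hs => ?_
  rw [Measure.map_apply (measurable_pi_apply i) hs]
  have h : (fun t : ι → Θ => t i) ⁻¹' s
      = Set.pi Set.univ (Function.update (fun _ : ι => Set.univ) i s) := by
    ext t
    simp only [Set.mem_preimage, Set.mem_pi, Set.mem_univ, forall_true_left]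
    constructor
    · intro h j
      rcases eq_or_ne j i with rfl | hj
      · simpa using h
      · simp [Function.update_of_ne hj]
    · intro h
      simpa using h i
  rw [h, Measure.pi_pi]
  rw [Finset.prod_eq_single i (fun j _ hj => by simp [Function.update_of_ne hj]) (by simp)]
  simp

lemma aux_integral_eval {ι : Type*} [Fintype ι] {Θ : Type*} [MeasurableSpace Θ]
    (P : Measure Θ) [IsProbabilityMeasure P] (i : ι) (g : Θ → ℝ)
    (hg : AEStronglyMeasurable g P) :
    ∫ t : ι → Θ, g (t i) ∂(Measure.pi fun _ => P) = ∫ θ, g θ ∂P := by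
  have h := aux_measurePreserving_eval P i
  have hg' : AEStronglyMeasurable g ((Measure.pi fun _ : ι => P).map fun t => t i) := by
    rw [h.map_eq]; exact hg
  rw [← integral_map (measurable_pi_apply i).aemeasurable hg', h.map_eq]

lemma aux_integrable_eval {ι : Type*} [Fintype ι] {Θ : Type*} [MeasurableSpace Θ]
    (P : Measure Θ) [IsProbabilityMeasure P] (i : ι) (g : Θ → ℝ)
    (hg : Integrable g P) :
    Integrable (fun t : ι → Θ => g (t i)) (Measure.pi fun _ => P) :=
  ((aux_measurePreserving_eval P i).integrable_comp hg.aestronglyMeasurable).mpr hg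

/-- SNMC is an upper bound on the total expected information gain: with
`θ₀ ~ P`, `Y₁,…,Y_K` drawn given `θ₀`, and `θ₁,…,θ_L` i.i.d. from the prior
independent of the data, the nested Monte Carlo quantity using the `L`
contrastive samples in the denominator upper-bounds `I_total`. -/
theorem SNMC_ge_total_EIG
    {Θ Y : Type*} [MeasurableSpace Θ] [MeasurableSpace Y]
    (P : Measure Θ) [IsProbabilityMeasure P]
    (ν : Measure Y) [SigmaFinite ν]
    (K L : ℕ) (hL : 0 < L)
    (lik : Fin K → Θ → Y → ℝ)
    (hlik_meas : ∀ k, Measurable (Function.uncurry (lik k)))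
    (hlik_pos : ∀ k θ y, 0 < lik k θ y)
    (hlik_int : ∀ k θ, ∫ y, lik k θ y ∂ν = 1)
    (pmarg : (Fin K → Y) → ℝ)
    (hpmarg : ∀ ys, pmarg ys = ∫ θ, ∏ k, lik k θ (ys k) ∂P)
    (hpmarg_pos : ∀ ys, 0 < pmarg ys)
    (hItot_int : Integrable (fun z : Θ × (Fin K → Y) =>
      (∏ k, lik k z.1 (z.2 k)) * Real.log ((∏ k, lik k z.1 (z.2 k)) / pmarg z.2))
      (P.prod (Measure.pi fun _ => ν)))
    (hSNMC_int : Integrable (fun z : (Fin (L + 1) → Θ) × (Fin K → Y) =>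
      (∏ k, lik k (z.1 0) (z.2 k)) *
        Real.log ((∏ k, lik k (z.1 0) (z.2 k)) /
          ((1 / (L : ℝ)) * ∑ ℓ : Fin L, ∏ k, lik k (z.1 ℓ.succ) (z.2 k))))
      ((Measure.pi fun _ => P).prod (Measure.pi fun _ => ν))) :
    (∫ θ₀ : Θ,
        ∫ ys : Fin K → Y,
          (∏ k, lik k θ₀ (ys k)) *
            Real.log ((∏ k, lik k θ₀ (ys k)) / pmarg ys)
          ∂(Measure.pi fun _ => ν)
      ∂P)
    ≤ ∫ θs : Fin (L + 1) → Θ,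
        ∫ ys : Fin K → Y,
          (∏ k, lik k (θs 0) (ys k)) *
            Real.log ((∏ k, lik k (θs 0) (ys k)) /
              ((1 / (L : ℝ)) * ∑ ℓ : Fin L, ∏ k, lik k (θs ℓ.succ) (ys k)))
          ∂(Measure.pi fun _ => ν)
      ∂(Measure.pi fun _ => P) := by
  classical
  have hL' : (0:ℝ) < (L:ℝ) := by exact_mod_cast hL
  have hFinL : Nonempty (Fin L) := ⟨⟨0, hL⟩⟩
  set νK : Measure (Fin K → Y) := Measure.pi fun _ => ν with hνKdef
  set μL : Measure (Fin (L + 1) → Θ) := Measure.pi fun _ => P with hμLdef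
  have hf_pos : ∀ (θ : Θ) (ys : Fin K → Y), 0 < ∏ k, lik k θ (ys k) := fun θ ys =>
    Finset.prod_pos fun k _ => hlik_pos k θ (ys k)
  have hf_meas : Measurable fun z : Θ × (Fin K → Y) => ∏ k, lik k z.1 (z.2 k) :=
    Finset.measurable_prod _ fun k _ =>
      (hlik_meas k).comp (measurable_fst.prodMk ((measurable_pi_apply k).comp measurable_snd))
  have hf_int : ∀ ys : Fin K → Y, Integrable (fun θ => ∏ k, lik k θ (ys k)) P := by
    intro ys
    by_contra hcon
    have h0 := integral_undef hcon
    rw [← hpmarg ys] at h0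
    exact (hpmarg_pos ys).ne' h0
  have hden_pos : ∀ (θs : Fin (L + 1) → Θ) (ys : Fin K → Y),
      0 < (1 / (L : ℝ)) * ∑ ℓ : Fin L, ∏ k, lik k (θs ℓ.succ) (ys k) := fun θs ys =>
    mul_pos (by positivity) (Finset.sum_pos (fun ℓ _ => hf_pos _ _) Finset.univ_nonempty)
  -- transport the LHS to an integral over μL.prod νK
  have hT : MeasurePreserving (fun w : (Fin (L + 1) → Θ) × (Fin K → Y) => (w.1 0, w.2))
      (μL.prod νK) (P.prod νK) :=
    (aux_measurePreserving_eval P 0).prod (MeasurePreserving.id νK)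
  have hFcomp_int : Integrable (fun w : (Fin (L + 1) → Θ) × (Fin K → Y) =>
      (∏ k, lik k (w.1 0) (w.2 k)) * Real.log ((∏ k, lik k (w.1 0) (w.2 k)) / pmarg w.2))
      (μL.prod νK) :=
    (hT.integrable_comp hItot_int.aestronglyMeasurable).mpr hItot_int
  have hA : (∫ θ₀ : Θ, ∫ ys : Fin K → Y,
        (∏ k, lik k θ₀ (ys k)) * Real.log ((∏ k, lik k θ₀ (ys k)) / pmarg ys) ∂νK ∂P)
      = ∫ z : Θ × (Fin K → Y),
        (∏ k, lik k z.1 (z.2 k)) * Real.log ((∏ k, lik k z.1 (z.2 k)) / pmarg z.2)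
        ∂(P.prod νK) :=
    integral_integral hItot_int
  have hB : (∫ θs : Fin (L + 1) → Θ, ∫ ys : Fin K → Y,
        (∏ k, lik k (θs 0) (ys k)) *
          Real.log ((∏ k, lik k (θs 0) (ys k)) /
            ((1 / (L : ℝ)) * ∑ ℓ : Fin L, ∏ k, lik k (θs ℓ.succ) (ys k))) ∂νK ∂μL)
      = ∫ w : (Fin (L + 1) → Θ) × (Fin K → Y),
        (∏ k, lik k (w.1 0) (w.2 k)) *
          Real.log ((∏ k, lik k (w.1 0) (w.2 k)) /
            ((1 / (L : ℝ)) * ∑ ℓ : Fin L, ∏ k, lik k (w.1 ℓ.succ) (w.2 k)))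
        ∂(μL.prod νK) :=
    integral_integral hSNMC_int
  rw [hA, hB]
  have hC : (∫ z : Θ × (Fin K → Y),
        (∏ k, lik k z.1 (z.2 k)) * Real.log ((∏ k, lik k z.1 (z.2 k)) / pmarg z.2)
        ∂(P.prod νK))
      = ∫ w : (Fin (L + 1) → Θ) × (Fin K → Y),
        (∏ k, lik k (w.1 0) (w.2 k)) * Real.log ((∏ k, lik k (w.1 0) (w.2 k)) / pmarg w.2)
        ∂(μL.prod νK) := by
    have hF' : AEStronglyMeasurable
        (fun z : Θ × (Fin K → Y) =>
          (∏ k, lik k z.1 (z.2 k)) * Real.log ((∏ k, lik k z.1 (z.2 k)) / pmarg z.2))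
        ((μL.prod νK).map fun w : (Fin (L + 1) → Θ) × (Fin K → Y) => (w.1 0, w.2)) := by
      rw [hT.map_eq]; exact hItot_int.aestronglyMeasurable
    rw [← hT.map_eq, integral_map hT.measurable.aemeasurable hF']
  rw [hC]
  -- reduce to nonnegativity of the gap
  set H : (Fin (L + 1) → Θ) × (Fin K → Y) → ℝ := fun w =>
    (∏ k, lik k (w.1 0) (w.2 k)) *
      (Real.log (pmarg w.2) -
        Real.log ((1 / (L : ℝ)) * ∑ ℓ : Fin L, ∏ k, lik k (w.1 ℓ.succ) (w.2 k))) with hHdef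
  have hpt : ∀ w : (Fin (L + 1) → Θ) × (Fin K → Y),
      ((∏ k, lik k (w.1 0) (w.2 k)) *
          Real.log ((∏ k, lik k (w.1 0) (w.2 k)) /
            ((1 / (L : ℝ)) * ∑ ℓ : Fin L, ∏ k, lik k (w.1 ℓ.succ) (w.2 k))))
        - ((∏ k, lik k (w.1 0) (w.2 k)) *
            Real.log ((∏ k, lik k (w.1 0) (w.2 k)) / pmarg w.2)) = H w := by
    intro w
    have ha := hf_pos (w.1 0) w.2
    have hd := hden_pos w.1 w.2
    have hb := hpmarg_pos w.2
    rw [hHdef]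
    simp only
    rw [Real.log_div ha.ne' hd.ne', Real.log_div ha.ne' hb.ne']
    ring
  have hH_int : Integrable H (μL.prod νK) :=
    (hSNMC_int.sub hFcomp_int).congr (Filter.Eventually.of_forall fun w => by
      simp only [Pi.sub_apply]; exact hpt w)
  have h0 : 0 ≤ ∫ w, H w ∂(μL.prod νK) := by
    rw [integral_prod_symm _ hH_int]
    apply integral_nonneg_of_ae
    filter_upwards [hH_int.prod_left_ae] with ys hsec
    -- per-ys analysis
    have hb := hpmarg_pos ys
    set g₁ : Θ → ℝ := fun θ => ∏ k, lik k θ (ys k) with hg₁def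
    set g₂ : (Fin L → Θ) → ℝ :=
      fun t => (1 / (L : ℝ)) * ∑ ℓ : Fin L, ∏ k, lik k (t ℓ) (ys k) with hg₂def
    have hg₁_int : Integrable g₁ P := hf_int ys
    have hg₂_int : Integrable g₂ (Measure.pi fun _ : Fin L => P) :=
      (integrable_finset_sum _ fun ℓ _ =>
        aux_integrable_eval P ℓ (fun θ => ∏ k, lik k θ (ys k)) (hf_int ys)).const_mul _
    have hg₂_integral : ∫ t, g₂ t ∂(Measure.pi fun _ : Fin L => P) = pmarg ys := by
      rw [hg₂def]
      rw [integral_const_mul, integral_finset_sum _ fun ℓ _ =>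
        aux_integrable_eval P ℓ (fun θ => ∏ k, lik k θ (ys k)) (hf_int ys)]
      have : ∀ ℓ : Fin L, (∫ t : Fin L → Θ, ∏ k, lik k (t ℓ) (ys k)
          ∂(Measure.pi fun _ : Fin L => P)) = pmarg ys := fun ℓ => by
        rw [aux_integral_eval P ℓ (fun θ => ∏ k, lik k θ (ys k))
          (hf_int ys).aestronglyMeasurable, ← hpmarg]
      simp only [this, Finset.sum_const, Finset.card_univ, Fintype.card_fin, nsmul_eq_mul]
      field_simp [hL'.ne']
    -- the coordinate-splitting equivalence
    have mp := measurePreserving_piFinSuccAbove (fun _ : Fin (L + 1) => P) 0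
    set e := MeasurableEquiv.piFinSuccAbove (fun _ : Fin (L + 1) => Θ) 0 with hedef
    have he_apply : ∀ θs : Fin (L + 1) → Θ, e θs = (θs 0, fun j => θs j.succ) := by
      intro θs
      rw [hedef]
      simp only [MeasurableEquiv.piFinSuccAbove, Fin.zero_succAbove, MeasurableEquiv.coe_mk,
        Equiv.coe_fn_symm_mk, Fin.insertNthEquiv, Equiv.coe_fn_mk, Equiv.coe_fn_symm_mk]
      rfl
    have hprod_int : Integrable (fun z : Θ × (Fin L → Θ) => g₁ z.1 * g₂ z.2)
        (P.prod (Measure.pi fun _ : Fin L => P)) := hg₁_int.mul_prod hg₂_int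
    have h2_int : Integrable (fun θs : Fin (L + 1) → Θ => g₁ (θs 0) * g₂ (fun j => θs j.succ))
        μL := by
      have h := (mp.integrable_comp_emb e.measurableEmbedding).mpr hprod_int
      have : ((fun z : Θ × (Fin L → Θ) => g₁ z.1 * g₂ z.2) ∘ e)
          = fun θs : Fin (L + 1) → Θ => g₁ (θs 0) * g₂ (fun j => θs j.succ) := by
        funext θs; simp [Function.comp, he_apply θs]
      rwa [this] at h
    have h2_integral : ∫ θs, g₁ (θs 0) * g₂ (fun j => θs j.succ) ∂μL
        = pmarg ys * pmarg ys := by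
      have h := mp.integral_comp' (f := e) (fun z : Θ × (Fin L → Θ) => g₁ z.1 * g₂ z.2)
      have heq : (fun θs : Fin (L + 1) → Θ => g₁ (θs 0) * g₂ (fun j => θs j.succ))
          = fun θs => g₁ ((e θs).1) * g₂ ((e θs).2) := by
        funext θs; rw [he_apply θs]
      rw [heq]
      rw [h, integral_prod_mul, hg₂_integral, ← hpmarg]
    have h1_int : Integrable (fun θs : Fin (L + 1) → Θ => g₁ (θs 0)) μL :=
      aux_integrable_eval P 0 g₁ hg₁_int
    have h1_integral : ∫ θs, g₁ (θs 0) ∂μL = pmarg ys := by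
      rw [aux_integral_eval P 0 g₁ hg₁_int.aestronglyMeasurable, ← hpmarg]
    -- lower bound function
    set G : (Fin (L + 1) → Θ) → ℝ :=
      fun θs => g₁ (θs 0) - (1 / pmarg ys) * (g₁ (θs 0) * g₂ (fun j => θs j.succ)) with hGdef
    have hG_int : Integrable G μL := h1_int.sub (h2_int.const_mul _)
    have hG_integral : ∫ θs, G θs ∂μL = 0 := by
      rw [hGdef]
      rw [integral_sub h1_int (h2_int.const_mul _), integral_const_mul, h1_integral,
        h2_integral]
      field_simp; simp
    have hle : ∀ θs : Fin (L + 1) → Θ, G θs ≤ H (θs, ys) := by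
      intro θs
      have ha : 0 < g₁ (θs 0) := hf_pos _ _
      have hd : 0 < g₂ (fun j => θs j.succ) := hden_pos θs ys
      have hlog : Real.log (g₂ fun j => θs j.succ) - Real.log (pmarg ys)
          ≤ (g₂ fun j => θs j.succ) / pmarg ys - 1 := by
        rw [← Real.log_div hd.ne' hb.ne']
        exact Real.log_le_sub_one_of_pos (div_pos hd hb)
      have hH : H (θs, ys) = g₁ (θs 0) *
          (Real.log (pmarg ys) - Real.log (g₂ fun j => θs j.succ)) := rfl
      rw [hH, hGdef]
      have h1 : 1 - (g₂ fun j => θs j.succ) / pmarg ys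
          ≤ Real.log (pmarg ys) - Real.log (g₂ fun j => θs j.succ) := by linarith
      calc g₁ (θs 0) - 1 / pmarg ys * (g₁ (θs 0) * g₂ fun j => θs j.succ)
          = g₁ (θs 0) * (1 - (g₂ fun j => θs j.succ) / pmarg ys) := by field_simp
        _ ≤ g₁ (θs 0) * (Real.log (pmarg ys) - Real.log (g₂ fun j => θs j.succ)) :=
            mul_le_mul_of_nonneg_left h1 ha.le
    calc (0:ℝ) = ∫ θs, G θs ∂μL := hG_integral.symm
      _ ≤ ∫ θs, H (θs, ys) ∂μL := integral_mono hG_int hsec hle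
  -- conclude
  have hsub := integral_sub hSNMC_int hFcomp_int
  have heq : (fun w : (Fin (L + 1) → Θ) × (Fin K → Y) =>
      ((∏ k, lik k (w.1 0) (w.2 k)) *
          Real.log ((∏ k, lik k (w.1 0) (w.2 k)) /
            ((1 / (L : ℝ)) * ∑ ℓ : Fin L, ∏ k, lik k (w.1 ℓ.succ) (w.2 k))))
        - ((∏ k, lik k (w.1 0) (w.2 k)) *
            Real.log ((∏ k, lik k (w.1 0) (w.2 k)) / pmarg w.2))) = H := funext hpt
  rw [heq] at hsub
  linarith [h0, hsub.symm.le, hsub.le]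
end
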